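/- Let 𝓜₁ be the linear operator on H_N defined on the basis (ψ^N_n) by 𝓜₁ψ^N_n := ψ^N_{n+1} + ψ^N_{n−1} (with the conventions ψ^N_{−1} := 0 and ψ^N_N := 0), i.e. the operator whose matrix in the basis (ψ^N_n) is the tridiagonal 0–1 matrix M₁. Then for every z ∈ ℂ∖{0}: 𝓜₁ψ^a_z = Σ_{n=0}^{N−1} [ conj(z)^(−1)·μ(n)·√(C^N_n/C^N_{n−1})·ã(τ(z)/ℏ − (n−1)) + conj(z)·ν(n)·√(C^N_n/C^N_{n+1})·ã(τ(z)/ℏ − (n+1)) ] · conj(φ_n(z)) · φ_n, where the term containing μ(n) is omitted for n = 0 and the term containing ν(n) is omitted for n = N−1. (This expresses 𝓜₁ψ^a_z = ψ^{Σ₁(z)a}_z.) -/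

import Mathlib

open MeasureTheory Complex Real

noncomputable section

/-- The measure `dμ_N(z) = (1/π)·(1+|z|²)^{-(N+1)} dA(z)` on `ℂ`. -/
def muN (N : ℕ) : Measure ℂ :=
  volume.withDensity (fun z => ENNReal.ofReal (1 / (Real.pi * (1 + ‖z‖ ^ 2) ^ (N + 1))))

/-- The basis vectors `φ_n(z) = √(N!/(n!(N−1−n)!))·zⁿ`. -/
def phiN (N n : ℕ) : ℂ → ℂ :=
  fun z => (Real.sqrt ((N.factorial : ℝ) / (n.factorial * (N - 1 - n).factorial)) : ℂ) * z ^ n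

/-- The coherent state `ρ_{z₀}(z) = N·(1+conj(z₀)·z)^{N−1}`. -/
def rhoN (N : ℕ) (z₀ : ℂ) : ℂ → ℂ :=
  fun z => (N : ℂ) * (1 + (starRingEnd ℂ) z₀ * z) ^ (N - 1)

/-- The inner product `⟨P,Q⟩ = ∫ P(z) conj(Q(z)) dμ_N(z)`, linear in the first argument. -/
def hermN (N : ℕ) (P Q : ℂ → ℂ) : ℂ :=
  ∫ z, P z * (starRingEnd ℂ) (Q z) ∂(muN N)

/-- The Fourier transform `ã(y) = (2π)^{-1/2} ∫ e^{ixy} a(x) dx`. -/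
def tildeF (a : ℝ → ℂ) (y : ℝ) : ℂ :=
  (Real.sqrt (2 * Real.pi))⁻¹ * ∫ x : ℝ, Complex.exp (Complex.I * x * y) * a x

/-- `τ(z) = |z|²/(1+|z|²)`. -/
def tauS (z : ℂ) : ℝ := ‖z‖ ^ 2 / (1 + ‖z‖ ^ 2)

/-- The building vector `ψ^a_z = ∫ a(t)·e^{iτ(z)t/ℏ}·ρ_{e^{it}z} dt/√(2π)`. -/
def psiA (N : ℕ) (ℏ : ℝ) (a : ℝ → ℂ) (z : ℂ) : ℂ → ℂ :=
  fun w => ∫ t : ℝ, a t * Complex.exp (Complex.I * (tauS z) * t / (ℏ : ℂ)) *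
    rhoN N (Complex.exp (Complex.I * t) * z) w / (Real.sqrt (2 * Real.pi) : ℂ)

/-- `C^N_n = N·binom(N−1,n)·∫₀¹ |ã((τ−nℏ)/ℏ)|²·(τ/(1−τ))ⁿ·(1−τ)^{N−1} dτ`. -/
def CNn (N : ℕ) (ℏ : ℝ) (a : ℝ → ℂ) (n : ℕ) : ℝ :=
  N * ((N - 1).choose n) *
    ∫ τ in (0:ℝ)..1, ‖tildeF a ((τ - n * ℏ) / ℏ)‖ ^ 2 * (τ / (1 - τ)) ^ n * (1 - τ) ^ (N - 1)

/-- The normalized vectors `ψ^N_n = √(C^N_n)·φ_n`. -/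
def psiNn (N : ℕ) (ℏ : ℝ) (a : ℝ → ℂ) (n : ℕ) : ℂ → ℂ :=
  fun z => (Real.sqrt (CNn N ℏ a n) : ℂ) * phiN N n z


section Helpers

lemma integrable_exp_mul' (a : SchwartzMap ℝ ℂ) (y : ℝ) :
    Integrable (fun t : ℝ => Complex.exp (Complex.I * t * y) * a t) := by
  refine (a.integrable.norm.mono' ?_ ?_)
  · exact Continuous.aestronglyMeasurable (by fun_prop)
  · filter_upwards with t
    rw [norm_mul]
    have : ‖Complex.exp (Complex.I * t * y)‖ = 1 := by
      simp [Complex.norm_exp]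
    simp [this]

lemma fact_eq' (N n : ℕ) (hN : 1 ≤ N) (hn : n ≤ N - 1) :
    (N.factorial : ℝ) / (n.factorial * (N - 1 - n).factorial)
      = (N : ℝ) * ((N - 1).choose n) := by
  have h1 : (N-1).choose n * n.factorial * (N-1-n).factorial = (N-1).factorial :=
    Nat.choose_mul_factorial_mul_factorial hn
  have h2 : N * (N-1).factorial = N.factorial := Nat.mul_factorial_pred (by omega)
  have h3 : (N.factorial : ℝ) = (N : ℝ) * ((N-1).choose n) * (n.factorial * (N-1-n).factorial) := by
    rw [← h2, ← h1]; push_cast; ring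
  rw [h3]
  have hpos : (0:ℝ) < (n.factorial * (N-1-n).factorial : ℝ) := by positivity
  field_simp

lemma psiA_expand (N : ℕ) (hN : 1 ≤ N) (ℏ : ℝ) (hℏ : 0 < ℏ) (a : SchwartzMap ℝ ℂ) (z : ℂ) :
    psiA N ℏ (⇑a) z = fun w => ∑ n ∈ Finset.range N,
      tildeF (⇑a) (tauS z / ℏ - n) * (starRingEnd ℂ) (phiN N n z) * phiN N n w := by
  funext w
  have hsq : ((Real.sqrt (2*Real.pi) : ℝ) : ℂ) ≠ 0 := by
    simp only [ne_eq, Complex.ofReal_eq_zero]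
    positivity
  have hℏ' : (ℏ : ℂ) ≠ 0 := by exact_mod_cast hℏ.ne'
  have hint : ∀ t : ℝ,
      a t * Complex.exp (Complex.I * (tauS z) * t / (ℏ : ℂ)) *
        rhoN N (Complex.exp (Complex.I * t) * z) w / (Real.sqrt (2 * Real.pi) : ℂ)
      = ∑ n ∈ Finset.range N,
          ((N:ℂ) * ((N-1).choose n : ℕ) * ((starRingEnd ℂ) z * w)^n / (Real.sqrt (2*Real.pi) : ℂ))
            * (Complex.exp (Complex.I * t * ((tauS z / ℏ - n : ℝ) : ℂ)) * a t) := by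
    intro t
    have hconj : (starRingEnd ℂ) (Complex.exp (Complex.I * t) * z) * w
        = Complex.exp (-(Complex.I * t)) * ((starRingEnd ℂ) z * w) := by
      have h1 : (starRingEnd ℂ) (Complex.exp (Complex.I * t)) = Complex.exp (-(Complex.I * t)) := by
        rw [← Complex.exp_conj]
        congr 1
        simp [Complex.conj_I]
      rw [map_mul, h1]
      ring
    have hN1 : N - 1 + 1 = N := Nat.succ_pred_eq_of_pos hN
    have hpow : (1 + (starRingEnd ℂ) (Complex.exp (Complex.I * t) * z) * w) ^ (N - 1)
        = ∑ n ∈ Finset.range N,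
            (((N-1).choose n : ℕ) : ℂ) * ((starRingEnd ℂ) z * w)^n * Complex.exp (-(Complex.I * n * t)) := by
      rw [hconj, add_comm, add_pow, hN1]
      refine Finset.sum_congr rfl fun n _ => ?_
      rw [one_pow, mul_pow, ← Complex.exp_nat_mul]
      ring_nf
    rw [rhoN, hpow, Finset.mul_sum, Finset.mul_sum, Finset.sum_div]
    refine Finset.sum_congr rfl fun n _ => ?_
    rw [show Complex.I * t * ((tauS z / ℏ - n : ℝ) : ℂ)
        = Complex.I * (tauS z) * t / ℏ + -(Complex.I * n * t) by push_cast; field_simp; ring]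
    rw [Complex.exp_add]
    ring
  rw [psiA]
  rw [MeasureTheory.integral_congr_ae (Filter.Eventually.of_forall hint)]
  rw [MeasureTheory.integral_finset_sum _ (fun n _ => (integrable_exp_mul' a _).const_mul _)]
  refine Finset.sum_congr rfl fun n hn => ?_
  rw [MeasureTheory.integral_const_mul]
  have hn' : n ≤ N - 1 := by
    have := Finset.mem_range.mp hn; omega
  rw [tildeF, phiN, phiN]
  simp only [map_mul, map_pow, Complex.conj_ofReal]
  have hr : ((Real.sqrt ((N.factorial : ℝ) / (n.factorial * (N - 1 - n).factorial)) : ℝ) : ℂ)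
      * ((Real.sqrt ((N.factorial : ℝ) / (n.factorial * (N - 1 - n).factorial)) : ℝ) : ℂ)
      = (N : ℂ) * (((N - 1).choose n : ℕ) : ℂ) := by
    rw [← Complex.ofReal_mul, Real.mul_self_sqrt (by positivity), fact_eq' N n hN hn']
    push_cast; ring
  rw [div_eq_mul_inv, mul_pow]
  simp only [Complex.ofReal_inv]
  linear_combination -(∫ x : ℝ, Complex.exp (Complex.I * x * ((tauS z / ℏ - n : ℝ) : ℂ)) * a x)
    * ((Real.sqrt (2*Real.pi) : ℂ))⁻¹ * ((starRingEnd ℂ) z)^n * w^n * hr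

lemma sqrt_up' (N i : ℕ) (h : i + 1 ≤ N - 1) (hN : 1 ≤ N) :
    Real.sqrt (((N:ℝ) - 1 - i)/((i:ℝ)+1))
      * Real.sqrt ((N.factorial : ℝ)/(i.factorial * (N-1-i).factorial))
    = Real.sqrt ((N.factorial : ℝ)/((i+1).factorial * (N-1-(i+1)).factorial)) := by
  have h2 : i + 2 ≤ N := by omega
  have e3 : ((N - 1 - i : ℕ) : ℝ) = (N:ℝ) - 1 - i := by
    have : N - 1 - i = N - (i+1) := by omega
    rw [this, Nat.cast_sub (by omega)]
    push_cast; ring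
  have hnn : (0:ℝ) ≤ ((N:ℝ) - 1 - i)/((i:ℝ)+1) := by
    apply div_nonneg _ (by positivity)
    rw [← e3]; positivity
  rw [← Real.sqrt_mul hnn]
  congr 1
  have f1 : ((N-1-i).factorial : ℝ) = ((N-1-i : ℕ) : ℝ) * ((N-1-(i+1)).factorial : ℝ) := by
    have : N - 1 - i = (N - 1 - (i+1)) + 1 := by omega
    rw [this, Nat.factorial_succ]; push_cast; ring
  have f2 : (((i+1)).factorial : ℝ) = ((i:ℝ)+1) * (i.factorial : ℝ) := by
    rw [Nat.factorial_succ]; push_cast; ring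
  rw [f1, f2, e3]
  have p1 : (0:ℝ) < (i.factorial : ℝ) := by positivity
  have p2 : (0:ℝ) < ((N-1-(i+1)).factorial : ℝ) := by positivity
  have p3 : (0:ℝ) < (N:ℝ) - 1 - i := by rw [← e3]; exact_mod_cast Nat.pos_of_ne_zero (by omega)
  have p4 : (0:ℝ) < (i:ℝ) + 1 := by positivity
  field_simp

lemma sqrt_down' (N i : ℕ) (h : i + 1 ≤ N - 1) (hN : 1 ≤ N) :
    Real.sqrt (((i:ℝ)+1)/((N:ℝ) - ((i:ℝ)+1)))
      * Real.sqrt ((N.factorial : ℝ)/((i+1).factorial * (N-1-(i+1)).factorial))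
    = Real.sqrt ((N.factorial : ℝ)/(i.factorial * (N-1-i).factorial)) := by
  have h2 : i + 2 ≤ N := by omega
  have e3 : ((N - 1 - i : ℕ) : ℝ) = (N:ℝ) - ((i:ℝ)+1) := by
    have : N - 1 - i = N - (i+1) := by omega
    rw [this, Nat.cast_sub (by omega)]
    push_cast; ring
  have p3 : (0:ℝ) < (N:ℝ) - ((i:ℝ)+1) := by rw [← e3]; exact_mod_cast Nat.pos_of_ne_zero (by omega)
  have hnn : (0:ℝ) ≤ ((i:ℝ)+1)/((N:ℝ) - ((i:ℝ)+1)) := by positivity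
  rw [← Real.sqrt_mul hnn]
  congr 1
  have f1 : ((N-1-i).factorial : ℝ) = ((N:ℝ) - ((i:ℝ)+1)) * ((N-1-(i+1)).factorial : ℝ) := by
    have : N - 1 - i = (N - 1 - (i+1)) + 1 := by omega
    rw [this, Nat.factorial_succ]
    push_cast
    rw [show ((N - 1 - (i+1) : ℕ) : ℝ) + 1 = (N:ℝ) - ((i:ℝ)+1) by
      rw [show N - 1 - (i+1) = N - (i+2) by omega, Nat.cast_sub h2]; push_cast; ring]
  have f2 : (((i+1)).factorial : ℝ) = ((i:ℝ)+1) * (i.factorial : ℝ) := by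
    rw [Nat.factorial_succ]; push_cast; ring
  rw [f1, f2]
  have p1 : (0:ℝ) < (i.factorial : ℝ) := by positivity
  have p2 : (0:ℝ) < ((N-1-(i+1)).factorial : ℝ) := by positivity
  have p4 : (0:ℝ) < (i:ℝ) + 1 := by positivity
  field_simp

lemma termA' (N : ℕ) (hN : 1 ≤ N) (ℏ : ℝ) (a : ℝ → ℂ) (z w : ℂ) (hz : z ≠ 0) (i : ℕ)
    (h : i + 1 ≤ N - 1) (hC0 : 0 < CNn N ℏ a i) (hC1 : 0 < CNn N ℏ a (i+1)) :
    tildeF a (tauS z/ℏ - i) * (starRingEnd ℂ) (phiN N i z)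
        * ((Real.sqrt (CNn N ℏ a i) : ℂ))⁻¹ * psiNn N ℏ a (i+1) w
    = (((starRingEnd ℂ) z)⁻¹ * (Real.sqrt (((i+1:ℕ) : ℝ)/((N:ℝ) - ((i+1:ℕ):ℝ))) : ℂ)
        * (Real.sqrt (CNn N ℏ a (i+1) / CNn N ℏ a i) : ℂ)
        * tildeF a (tauS z/ℏ - (((i+1:ℕ):ℝ) - 1)))
      * (starRingEnd ℂ) (phiN N (i+1) z) * phiN N (i+1) w := by
  have hzc : (starRingEnd ℂ) z ≠ 0 := by
    intro hh
    apply hz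
    simpa using congrArg (starRingEnd ℂ) hh
  have harg : ((i+1:ℕ):ℝ) - 1 = (i:ℝ) := by push_cast; ring
  have harg2 : ((i+1:ℕ):ℝ) = (i:ℝ) + 1 := by push_cast; ring
  rw [harg, harg2]
  have kR : Real.sqrt (((i:ℝ)+1)/((N:ℝ) - ((i:ℝ)+1))) * Real.sqrt (CNn N ℏ a (i+1) / CNn N ℏ a i)
        * Real.sqrt ((N.factorial : ℝ)/((i+1).factorial * (N-1-(i+1)).factorial))
        * Real.sqrt (CNn N ℏ a i)
      = Real.sqrt ((N.factorial : ℝ)/(i.factorial * (N-1-i).factorial))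
        * Real.sqrt (CNn N ℏ a (i+1)) := by
    have hs0 : Real.sqrt (CNn N ℏ a i) ≠ 0 := by positivity
    rw [Real.sqrt_div hC1.le,
      show Real.sqrt (((i:ℝ)+1)/((N:ℝ) - ((i:ℝ)+1))) * (Real.sqrt (CNn N ℏ a (i+1)) / Real.sqrt (CNn N ℏ a i))
          * Real.sqrt ((N.factorial : ℝ)/((i+1).factorial * (N-1-(i+1)).factorial)) * Real.sqrt (CNn N ℏ a i)
        = (Real.sqrt (((i:ℝ)+1)/((N:ℝ) - ((i:ℝ)+1)))
            * Real.sqrt ((N.factorial : ℝ)/((i+1).factorial * (N-1-(i+1)).factorial)))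
          * Real.sqrt (CNn N ℏ a (i+1)) * (Real.sqrt (CNn N ℏ a i) / Real.sqrt (CNn N ℏ a i)) by ring,
      div_self hs0, sqrt_down' N i h hN, mul_one]
  have kC := congrArg (fun r : ℝ => (r : ℂ)) kR
  push_cast at kC
  simp only [psiNn, phiN, map_mul, map_pow, Complex.conj_ofReal]
  have hs0c : ((Real.sqrt (CNn N ℏ a i) : ℝ) : ℂ) ≠ 0 := by
    simp only [ne_eq, Complex.ofReal_eq_zero]
    positivity
  have e1 : ((Real.sqrt (CNn N ℏ a i) : ℝ) : ℂ) * ((Real.sqrt (CNn N ℏ a i) : ℝ) : ℂ)⁻¹ = 1 :=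
    mul_inv_cancel₀ hs0c
  have e2 : (starRingEnd ℂ) z * ((starRingEnd ℂ) z)⁻¹ = 1 := mul_inv_cancel₀ hzc
  set T := tildeF a (tauS z/ℏ - i) with hT
  set Z := (starRingEnd ℂ) z with hZ
  set s1 : ℂ := ((Real.sqrt ((N.factorial : ℝ)/((i+1).factorial * (N-1-(i+1)).factorial)) : ℝ) : ℂ) with hs1
  set sm : ℂ := ((Real.sqrt (((i:ℝ)+1)/((N:ℝ) - ((i:ℝ)+1))) : ℝ) : ℂ) with hsm
  set sq : ℂ := ((Real.sqrt (CNn N ℏ a (i+1) / CNn N ℏ a i) : ℝ) : ℂ) with hsq2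
  linear_combination (-(T * s1 * Z^i * w^(i+1) * (((Real.sqrt (CNn N ℏ a i) : ℝ) : ℂ))⁻¹)) * kC
    + (T * s1 * Z^i * w^(i+1) * sm * sq * s1) * e1
    - (T * s1 * Z^i * w^(i+1) * sm * sq * s1) * e2

lemma termB' (N : ℕ) (hN : 1 ≤ N) (ℏ : ℝ) (a : ℝ → ℂ) (z w : ℂ) (i : ℕ)
    (h : i + 1 ≤ N - 1) (hC0 : 0 < CNn N ℏ a i) (hC1 : 0 < CNn N ℏ a (i+1)) :
    tildeF a (tauS z/ℏ - ((i+1:ℕ):ℝ)) * (starRingEnd ℂ) (phiN N (i+1) z)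
        * ((Real.sqrt (CNn N ℏ a (i+1)) : ℂ))⁻¹ * psiNn N ℏ a i w
    = ((starRingEnd ℂ) z * (Real.sqrt (((N:ℝ) - 1 - (i:ℝ))/((i:ℝ)+1)) : ℂ)
        * (Real.sqrt (CNn N ℏ a i / CNn N ℏ a (i+1)) : ℂ)
        * tildeF a (tauS z/ℏ - ((i:ℝ) + 1)))
      * (starRingEnd ℂ) (phiN N i z) * phiN N i w := by
  have harg2 : ((i+1:ℕ):ℝ) = (i:ℝ) + 1 := by push_cast; ring
  rw [harg2]
  have kR : Real.sqrt (((N:ℝ) - 1 - (i:ℝ))/((i:ℝ)+1)) * Real.sqrt (CNn N ℏ a i / CNn N ℏ a (i+1))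
        * Real.sqrt ((N.factorial : ℝ)/(i.factorial * (N-1-i).factorial))
        * Real.sqrt (CNn N ℏ a (i+1))
      = Real.sqrt ((N.factorial : ℝ)/((i+1).factorial * (N-1-(i+1)).factorial))
        * Real.sqrt (CNn N ℏ a i) := by
    have hs1 : Real.sqrt (CNn N ℏ a (i+1)) ≠ 0 := by positivity
    rw [Real.sqrt_div hC0.le,
      show Real.sqrt (((N:ℝ) - 1 - (i:ℝ))/((i:ℝ)+1)) * (Real.sqrt (CNn N ℏ a i) / Real.sqrt (CNn N ℏ a (i+1)))
          * Real.sqrt ((N.factorial : ℝ)/(i.factorial * (N-1-i).factorial)) * Real.sqrt (CNn N ℏ a (i+1))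
        = (Real.sqrt (((N:ℝ) - 1 - (i:ℝ))/((i:ℝ)+1))
            * Real.sqrt ((N.factorial : ℝ)/(i.factorial * (N-1-i).factorial)))
          * Real.sqrt (CNn N ℏ a i) * (Real.sqrt (CNn N ℏ a (i+1)) / Real.sqrt (CNn N ℏ a (i+1))) by ring,
      div_self hs1, sqrt_up' N i h hN, mul_one]
  have kC := congrArg (fun r : ℝ => (r : ℂ)) kR
  push_cast at kC
  simp only [psiNn, phiN, map_mul, map_pow, Complex.conj_ofReal]
  have hs1c : ((Real.sqrt (CNn N ℏ a (i+1)) : ℝ) : ℂ) ≠ 0 := by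
    simp only [ne_eq, Complex.ofReal_eq_zero]
    positivity
  have e1 : ((Real.sqrt (CNn N ℏ a (i+1)) : ℝ) : ℂ) * ((Real.sqrt (CNn N ℏ a (i+1)) : ℝ) : ℂ)⁻¹ = 1 :=
    mul_inv_cancel₀ hs1c
  set T := tildeF a (tauS z/ℏ - ((i:ℝ)+1)) with hT
  set Z := (starRingEnd ℂ) z with hZ
  set s0 : ℂ := ((Real.sqrt ((N.factorial : ℝ)/(i.factorial * (N-1-i).factorial)) : ℝ) : ℂ) with hs0
  set sn : ℂ := ((Real.sqrt (((N:ℝ) - 1 - (i:ℝ))/((i:ℝ)+1)) : ℝ) : ℂ) with hsn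
  set sq : ℂ := ((Real.sqrt (CNn N ℏ a i / CNn N ℏ a (i+1)) : ℝ) : ℂ) with hsq2
  linear_combination (-(T * s0 * Z^(i+1) * w^i * (((Real.sqrt (CNn N ℏ a (i+1)) : ℝ) : ℂ))⁻¹)) * kC
    + (T * s0 * Z^(i+1) * w^i * sn * sq * s0) * e1

end Helpers

/-- for the operator `𝓜₁` with `𝓜₁ψ^N_n = ψ^N_{n+1} + ψ^N_{n−1}`
(conventions `ψ^N_{−1} = ψ^N_N = 0`), one has, for `z ≠ 0`,
`𝓜₁ψ^a_z = Σ_n [conj(z)⁻¹·μ(n)·√(C^N_n/C^N_{n−1})·ã(τ(z)/ℏ−(n−1))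
            + conj(z)·ν(n)·√(C^N_n/C^N_{n+1})·ã(τ(z)/ℏ−(n+1))]·conj(φ_n(z))·φ_n`,
the `μ`-term being omitted for `n = 0` and the `ν`-term for `n = N−1`. -/


theorem stmt7 (N : ℕ) (hN : 1 ≤ N) (ℏ : ℝ) (hℏ : 0 < ℏ) (a : SchwartzMap ℝ ℂ)
    (hC : ∀ n : ℕ, n ≤ N - 1 → 0 < CNn N ℏ (⇑a) n)
    (M1 : (ℂ → ℂ) →ₗ[ℂ] (ℂ → ℂ))
    (hM1 : ∀ n : ℕ, n ≤ N - 1 →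
      M1 (psiNn N ℏ (⇑a) n)
        = (if n + 1 ≤ N - 1 then psiNn N ℏ (⇑a) (n + 1) else 0)
          + (if 1 ≤ n then psiNn N ℏ (⇑a) (n - 1) else 0))
    (z : ℂ) (hz : z ≠ 0) :
    M1 (psiA N ℏ (⇑a) z) = fun w => ∑ n ∈ Finset.range N,
      ((if 1 ≤ n then
          ((starRingEnd ℂ) z)⁻¹ * (Real.sqrt ((n : ℝ) / ((N : ℝ) - n)) : ℂ)
            * (Real.sqrt (CNn N ℏ (⇑a) n / CNn N ℏ (⇑a) (n - 1)) : ℂ)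
            * tildeF (⇑a) (tauS z / ℏ - ((n : ℝ) - 1))
        else 0)
       + (if n + 1 ≤ N - 1 then
          (starRingEnd ℂ) z * (Real.sqrt (((N : ℝ) - 1 - n) / ((n : ℝ) + 1)) : ℂ)
            * (Real.sqrt (CNn N ℏ (⇑a) n / CNn N ℏ (⇑a) (n + 1)) : ℂ)
            * tildeF (⇑a) (tauS z / ℏ - ((n : ℝ) + 1))
        else 0))
      * (starRingEnd ℂ) (phiN N n z) * phiN N n w := by
  have hdecomp : psiA N ℏ (⇑a) z
      = ∑ n ∈ Finset.range N,
          (tildeF (⇑a) (tauS z / ℏ - n) * (starRingEnd ℂ) (phiN N n z)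
            * ((Real.sqrt (CNn N ℏ (⇑a) n) : ℂ))⁻¹) • psiNn N ℏ (⇑a) n := by
    rw [psiA_expand N hN ℏ hℏ a z]
    funext w
    rw [Finset.sum_apply]
    refine Finset.sum_congr rfl fun n hn => ?_
    have hCp := hC n (by have := Finset.mem_range.mp hn; omega)
    have hs : ((Real.sqrt (CNn N ℏ (⇑a) n) : ℝ) : ℂ) ≠ 0 := by
      simp only [ne_eq, Complex.ofReal_eq_zero]; positivity
    simp only [Pi.smul_apply, smul_eq_mul, psiNn]
    field_simp
  rw [hdecomp, map_sum]
  simp only [LinearMap.map_smul]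
  funext w
  rw [Finset.sum_apply]
  have hterm : ∀ n ∈ Finset.range N,
      ((tildeF (⇑a) (tauS z / ℏ - n) * (starRingEnd ℂ) (phiN N n z)
          * ((Real.sqrt (CNn N ℏ (⇑a) n) : ℂ))⁻¹) • M1 (psiNn N ℏ (⇑a) n)) w
      = (tildeF (⇑a) (tauS z / ℏ - n) * (starRingEnd ℂ) (phiN N n z)
          * ((Real.sqrt (CNn N ℏ (⇑a) n) : ℂ))⁻¹)
        * ((if n + 1 ≤ N - 1 then psiNn N ℏ (⇑a) (n+1) w else 0)
          + (if 1 ≤ n then psiNn N ℏ (⇑a) (n-1) w else 0)) := by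
    intro n hn
    rw [Pi.smul_apply, smul_eq_mul, hM1 n (by have := Finset.mem_range.mp hn; omega)]
    congr 1
    rw [Pi.add_apply]
    congr 1 <;> split <;> simp
  rw [Finset.sum_congr rfl hterm]
  have hCrange : ∀ n, n ≤ N - 1 → 0 < CNn N ℏ (⇑a) n := hC
  obtain ⟨K, rfl⟩ : ∃ K, N = K + 1 := ⟨N - 1, by omega⟩
  simp only [Nat.add_sub_cancel] at hCrange ⊢
  simp only [mul_add, add_mul]
  rw [Finset.sum_add_distrib, Finset.sum_add_distrib]
  congr 1
  · -- μ part
    rw [Finset.sum_range_succ, if_neg (by omega), mul_zero, add_zero]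
    rw [Finset.sum_range_succ', if_neg (by omega), zero_mul, zero_mul, add_zero]
    refine Finset.sum_congr rfl fun i hi => ?_
    have hiK : i + 1 ≤ K := by have := Finset.mem_range.mp hi; omega
    rw [if_pos hiK, if_pos (by omega : 1 ≤ i + 1)]
    simp only [Nat.add_sub_cancel]
    exact termA' (K+1) hN ℏ (⇑a) z w hz i (by omega)
      (hCrange i (by omega)) (hCrange (i+1) (by omega))
  · -- ν part
    rw [Finset.sum_range_succ', if_neg (by omega), mul_zero, add_zero]
    rw [Finset.sum_range_succ, if_neg (by omega), zero_mul, zero_mul, add_zero]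
    refine Finset.sum_congr rfl fun i hi => ?_
    have hiK : i + 1 ≤ K := by have := Finset.mem_range.mp hi; omega
    rw [if_pos (by omega : 1 ≤ i + 1), if_pos hiK]
    simp only [Nat.add_sub_cancel]
    exact termB' (K+1) hN ℏ (⇑a) z w i (by omega)
      (hCrange i (by omega)) (hCrange (i+1) (by omega))
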